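/- If two alternating Cantor series ∑ (−1)^n ε_n/(d_1⋯d_n) and ∑ (−1)^n ε'_n/(d_1⋯d_n) with digits agreeing up to position m−1 and ε_m ≠ ε'_m represent the same number, then |ε_m − ε'_m| = 1, and (assuming ε_m = ε'_m + 1) for all i ≥ 1: ε_{m+2i−1} = d_{m+2i−1} − 1, ε_{m+2i} = 0, ε'_{m+2i−1} = 0, ε'_{m+2i} = d_{m+2i} − 1. -/

import Mathlib

open Finset

/-- Product d_1 d_2 ... d_n. -/
noncomputable def P (d : ℕ → ℕ) (n : ℕ) : ℝ := ∏ i ∈ Finset.Icc 1 n, (d i : ℝ)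

/-- The alternating Cantor series sum ∑_{n≥1} (-1)^n ε_n/(d_1...d_n). -/
noncomputable def negaSum (d ε : ℕ → ℕ) : ℝ :=
  ∑' n : ℕ, (-1 : ℝ) ^ (n + 1) * (ε (n + 1) : ℝ) / P d (n + 1)

/-- a₀ = ∑_{n≥1} (-1)^{n+1}/(d_1...d_n). -/
noncomputable def a0 (d : ℕ → ℕ) : ℝ := ∑' n : ℕ, (-1 : ℝ) ^ n / P d (n + 1)

lemma P_succ (d : ℕ → ℕ) (n : ℕ) : P d (n + 1) = P d n * d (n + 1) := by
  unfold P
  rw [Finset.prod_Icc_succ_top (by omega : 1 ≤ n + 1)]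

lemma P_ge (d : ℕ → ℕ) (hd : ∀ n, 1 ≤ n → 2 ≤ d n) (n : ℕ) : (2:ℝ)^n ≤ P d n := by
  induction n with
  | zero => simp [P]
  | succ n ih =>
    rw [P_succ, pow_succ]
    have h2 : (2:ℝ) ≤ d (n+1) := by exact_mod_cast hd (n+1) (by omega)
    have h0 : (0:ℝ) < 2^n := by positivity
    nlinarith

lemma P_pos (d : ℕ → ℕ) (hd : ∀ n, 1 ≤ n → 2 ≤ d n) (n : ℕ) : 0 < P d n :=
  lt_of_lt_of_le (by positivity) (P_ge d hd n)

lemma div_P_le (d : ℕ → ℕ) (hd : ∀ n, 1 ≤ n → 2 ≤ d n) (n : ℕ) (x : ℝ)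
    (hx : x ≤ d (n+1)) : x / P d (n+1) ≤ (1/2:ℝ)^n := by
  have hp := P_pos d hd n
  have hp1 := P_pos d hd (n+1)
  have h2 : (2:ℝ)^n ≤ P d n := P_ge d hd n
  have hdpos : (0:ℝ) < d (n+1) := by
    have h := hd (n+1) (by omega)
    have : (0:ℕ) < d (n+1) := by omega
    exact_mod_cast this
  calc x / P d (n+1) ≤ (d (n+1) : ℝ) / P d (n+1) := by
        gcongr
      _ = 1 / P d n := by
        rw [P_succ]; field_simp
      _ ≤ (1/2:ℝ)^n := by
        rw [div_pow, one_pow]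
        apply div_le_div_of_nonneg_left _ _ _ <;> try positivity
        · exact h2

lemma one_div_P_le (d : ℕ → ℕ) (hd : ∀ n, 1 ≤ n → 2 ≤ d n) (n : ℕ) :
    1 / P d n ≤ (1/2:ℝ)^n := by
  rw [div_pow, one_pow]
  exact div_le_div_of_nonneg_left (by norm_num) (by positivity) (P_ge d hd n)

lemma summable_aux (f : ℕ → ℝ) (hf : ∀ n, |f n| ≤ (1/2:ℝ)^n) : Summable f := by
  have : Summable (fun n : ℕ => |f n|) :=
    Summable.of_nonneg_of_le (fun n => abs_nonneg _) hf summable_geometric_two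
  exact this.of_abs

lemma summable_negaSum (d ε : ℕ → ℕ) (hd : ∀ n, 1 ≤ n → 2 ≤ d n)
    (hε : ∀ n, 1 ≤ n → ε n ≤ d n - 1) :
    Summable (fun n : ℕ => (-1 : ℝ) ^ (n + 1) * (ε (n + 1) : ℝ) / P d (n + 1)) := by
  apply summable_aux
  intro n
  have hp1 := P_pos d hd (n+1)
  rw [abs_div, abs_mul, abs_pow, abs_neg, abs_one, one_pow, one_mul,
    abs_of_pos hp1, Nat.abs_cast]
  apply div_P_le d hd
  have h1 := hε (n+1) (by omega)
  have h2 := hd (n+1) (by omega)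
  have : ε (n+1) ≤ d (n+1) := by omega
  exact_mod_cast this

theorem alternating_cantor_eq_implies_tail (d ε ε' : ℕ → ℕ) (m : ℕ)
    (hm : 1 ≤ m) (hd : ∀ n, 1 ≤ n → 2 ≤ d n)
    (hε : ∀ n, 1 ≤ n → ε n ≤ d n - 1) (hε' : ∀ n, 1 ≤ n → ε' n ≤ d n - 1)
    (hagree : ∀ n, n < m → ε n = ε' n)
    (hne : ε m ≠ ε' m)
    (heq : negaSum d ε = negaSum d ε') :
    (ε m = ε' m + 1 ∨ ε' m = ε m + 1) ∧
    (ε m = ε' m + 1 → ∀ i : ℕ, ε (m + 2 * i + 1) = d (m + 2 * i + 1) - 1 ∧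
      ε (m + 2 * i + 2) = 0 ∧ ε' (m + 2 * i + 1) = 0 ∧
      ε' (m + 2 * i + 2) = d (m + 2 * i + 2) - 1) := by
  obtain ⟨k, rfl⟩ : ∃ k, m = k + 1 := ⟨m - 1, by omega⟩
  set F : ℕ → ℝ :=
    fun n => (-1:ℝ)^(n+1) * ((ε (n+1) : ℝ) - (ε' (n+1) : ℝ)) / P d (n+1) with hFdef
  have hεd : ∀ n : ℕ, (ε (n+1) : ℝ) ≤ ((d (n+1) - 1 : ℕ) : ℝ) := by
    intro n; exact_mod_cast hε (n+1) (by omega)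
  have hε'd : ∀ n : ℕ, (ε' (n+1) : ℝ) ≤ ((d (n+1) - 1 : ℕ) : ℝ) := by
    intro n; exact_mod_cast hε' (n+1) (by omega)
  have habsF : ∀ n, |F n| ≤ ((d (n+1) - 1 : ℕ) : ℝ) / P d (n+1) := by
    intro n
    have hp1 := P_pos d hd (n+1)
    simp only [hFdef]
    rw [abs_div, abs_mul, abs_pow, abs_neg, abs_one, one_pow, one_mul, abs_of_pos hp1]
    gcongr
    rw [abs_sub_le_iff]
    constructor
    · have := hεd n; have : (0:ℝ) ≤ ε' (n+1) := Nat.cast_nonneg _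
      linarith [hεd n]
    · have : (0:ℝ) ≤ ε (n+1) := Nat.cast_nonneg _
      linarith [hε'd n]
  have hdm1_le : ∀ n : ℕ, ((d (n+1) - 1 : ℕ) : ℝ) ≤ (d (n+1) : ℝ) := by
    intro n
    have : d (n+1) - 1 ≤ d (n+1) := by omega
    exact_mod_cast this
  have hFsum : Summable F := by
    apply summable_aux
    intro n
    exact le_trans (habsF n) (div_P_le d hd n _ (hdm1_le n))
  have hF0 : ∑' n, F n = 0 := by
    have h1 := summable_negaSum d ε hd hε
    have h2 := summable_negaSum d ε' hd hε'
    calc ∑' n, F n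
        = ∑' n : ℕ, ((-1:ℝ)^(n+1) * (ε (n+1):ℝ) / P d (n+1)
            - (-1:ℝ)^(n+1) * (ε' (n+1):ℝ) / P d (n+1)) := by
          apply tsum_congr; intro n; simp only [hFdef]; ring
      _ = negaSum d ε - negaSum d ε' := Summable.tsum_sub h1 h2
      _ = 0 := by rw [heq, sub_self]
  have hsplit := Summable.sum_add_tsum_nat_add (k+1) hFsum
  have hhead : ∑ i ∈ range (k+1), F i = F k := by
    apply Finset.sum_eq_single_of_mem k (self_mem_range_succ k)
    intro i hi hik
    have hi' : i + 1 < k + 1 := by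
      simp only [Finset.mem_range] at hi; omega
    have := hagree (i+1) hi'
    simp [hFdef, this]
  set T : ℝ := ∑' i : ℕ, F (i + (k+1)) with hTdef
  have hT : F k + T = 0 := by
    rw [← hF0, ← hsplit, hhead]
  -- the dominating telescoping series
  set b : ℕ → ℝ := fun j => ((d (j+k+2) - 1 : ℕ) : ℝ) / P d (j+k+2) with hbdef
  have hbnn : ∀ j, 0 ≤ b j := by
    intro j
    have := P_pos d hd (j+k+2)
    positivity
  have hble : ∀ j, b j ≤ (1/2:ℝ)^j := by
    intro j
    have h1 : b j ≤ (1/2:ℝ)^(j+k+1) := div_P_le d hd (j+k+1) _ (hdm1_le (j+k+1))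
    refine le_trans h1 (pow_le_pow_of_le_one (by norm_num) (by norm_num) (by omega))
  have hbS : Summable b :=
    Summable.of_nonneg_of_le hbnn hble summable_geometric_two
  set g : ℕ → ℝ := fun j => 1 / P d (j+k+1) with hgdef
  have hbg : ∀ j, b j = g j - g (j+1) := by
    intro j
    have hp := P_pos d hd (j+k+1)
    have h2 := hd (j+k+2) (by omega)
    have hdpos : (0:ℝ) < d (j+k+2) := by
      have : (0:ℕ) < d (j+k+2) := by omega
      exact_mod_cast this
    have hcast : ((d (j+k+2) - 1 : ℕ) : ℝ) = (d (j+k+2) : ℝ) - 1 := by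
      have : 1 ≤ d (j+k+2) := by omega
      push_cast [Nat.cast_sub this]; ring
    simp only [hbdef, hgdef]
    rw [show (j+1)+k+1 = j+k+2 from by omega, P_succ d (j+k+1), hcast]
    field_simp
  have htel : ∀ N, ∑ j ∈ range N, b j = g 0 - g N := by
    intro N
    rw [← Finset.sum_range_sub' g N]
    exact Finset.sum_congr rfl fun j _ => hbg j
  have hgtend : Filter.Tendsto g Filter.atTop (nhds 0) := by
    apply squeeze_zero (fun N => by have := P_pos d hd (N+k+1); positivity)
      (g := fun N => (1/2:ℝ)^N)
    · intro N
      refine le_trans (one_div_P_le d hd (N+k+1))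
        (pow_le_pow_of_le_one (by norm_num) (by norm_num) (by omega))
    · exact tendsto_pow_atTop_nhds_zero_of_lt_one (by norm_num) (by norm_num)
  have hbsum : ∑' j, b j = 1 / P d (k+1) := by
    have h1 : Filter.Tendsto (fun N => ∑ j ∈ range N, b j) Filter.atTop
        (nhds (∑' j, b j)) := hbS.hasSum.tendsto_sum_nat
    have h2 : Filter.Tendsto (fun N => ∑ j ∈ range N, b j) Filter.atTop
        (nhds (g 0 - 0)) := by
      simp only [htel]
      exact Filter.Tendsto.sub tendsto_const_nhds hgtend
    have := tendsto_nhds_unique h1 h2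
    rw [this]
    simp [hgdef]
  have hSumTail : Summable (fun j : ℕ => F (j + (k+1))) :=
    (summable_nat_add_iff (k+1)).mpr hFsum
  have habsTail : ∀ j : ℕ, |F (j + (k+1))| ≤ b j := fun j => habsF (j+k+1)
  have hTabs : |T| ≤ 1 / P d (k+1) := by
    rw [← hbsum, hTdef]
    have hn : Summable (fun i : ℕ => ‖F (i + (k+1))‖) := by
      simpa [Real.norm_eq_abs] using hSumTail.abs
    calc |∑' i : ℕ, F (i + (k+1))|
        = ‖∑' i : ℕ, F (i + (k+1))‖ := (Real.norm_eq_abs _).symm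
      _ ≤ ∑' i : ℕ, ‖F (i + (k+1))‖ := norm_tsum_le_tsum_norm hn
      _ = ∑' i : ℕ, |F (i + (k+1))| := by simp [Real.norm_eq_abs]
      _ ≤ ∑' j, b j := Summable.tsum_le_tsum habsTail hSumTail.abs hbS
  have hpk := P_pos d hd (k+1)
  -- Part 1
  have hFkabs : |F k| = |(ε (k+1) : ℝ) - (ε' (k+1) : ℝ)| / P d (k+1) := by
    simp only [hFdef]
    rw [abs_div, abs_mul, abs_pow, abs_neg, abs_one, one_pow, one_mul, abs_of_pos hpk]
  have hFkT : |F k| ≤ 1 / P d (k+1) := by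
    have : F k = -T := by linarith
    rw [this, abs_neg]; exact hTabs
  have hdiff1 : |(ε (k+1) : ℝ) - (ε' (k+1) : ℝ)| ≤ 1 := by
    rw [hFkabs] at hFkT
    exact (div_le_div_iff_of_pos_right hpk).mp hFkT
  have part1 : ε (k+1) = ε' (k+1) + 1 ∨ ε' (k+1) = ε (k+1) + 1 := by
    rw [abs_le] at hdiff1
    obtain ⟨hl, hr⟩ := hdiff1
    have h1 : ε (k+1) ≤ ε' (k+1) + 1 := by exact_mod_cast (by push_cast; linarith :
      (ε (k+1):ℝ) ≤ ((ε' (k+1) + 1 : ℕ):ℝ))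
    have h2 : ε' (k+1) ≤ ε (k+1) + 1 := by exact_mod_cast (by push_cast; linarith :
      (ε' (k+1):ℝ) ≤ ((ε (k+1) + 1 : ℕ):ℝ))
    omega
  refine ⟨part1, ?_⟩
  -- Part 2
  intro hcase i
  have hδ : (ε (k+1) : ℝ) - (ε' (k+1) : ℝ) = 1 := by
    rw [hcase]; push_cast; ring
  have hFk2 : F k = (-1:ℝ)^(k+1) / P d (k+1) := by
    simp only [hFdef]; rw [hδ, mul_one]
  have hTval : T = -((-1:ℝ)^(k+1) / P d (k+1)) := by
    rw [hFk2] at hT; linarith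
  set a : ℕ → ℝ := fun j => (-1:ℝ)^(k+2) * F (j + (k+1)) with hadef
  have haS : Summable a := hSumTail.mul_left _
  have hasum : ∑' j, a j = 1 / P d (k+1) := by
    simp only [hadef]
    rw [tsum_mul_left, ← hTdef, hTval]
    have h : ((-1:ℝ))^(k+2) * (-1:ℝ)^(k+1) = -1 := by
      rw [← pow_add, show k+2+(k+1) = 2*(k+1)+1 from by ring, pow_succ, pow_mul]
      norm_num
    rw [mul_neg, ← mul_div_assoc, h]
    rw [neg_div, neg_neg, one_div]
  have haleb : ∀ j, a j ≤ b j := by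
    intro j
    refine le_trans (le_abs_self _) ?_
    simp only [hadef]
    rw [abs_mul, abs_pow, abs_neg, abs_one, one_pow, one_mul]
    exact habsTail j
  have hae : ∀ j, a j = b j := by
    intro j
    by_contra hne2
    have hlt : a j < b j := lt_of_le_of_ne (haleb j) hne2
    have : ∑' j, a j < ∑' j, b j := Summable.tsum_lt_tsum haleb hlt haS hbS
    rw [hasum, hbsum] at this
    exact lt_irrefl _ this
  have key : ∀ j, ((-1:ℝ))^j * ((ε (j+k+2) : ℝ) - (ε' (j+k+2) : ℝ))
      = ((d (j+k+2) - 1 : ℕ) : ℝ) := by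
    intro j
    have h := hae j
    have hp := P_pos d hd (j+k+2)
    have hsign : ((-1:ℝ))^(k+2) * (-1:ℝ)^(j+k+2) = (-1)^j := by
      rw [← pow_add, show (k+2)+(j+k+2) = 2*(k+2)+j from by ring, pow_add, pow_mul]
      norm_num
    simp only [hadef, hbdef, hFdef] at h
    simp only [show j+(k+1)+1 = j+k+2 from by omega] at h
    have h2 : (-1:ℝ)^j * ((ε (j+k+2) : ℝ) - (ε' (j+k+2) : ℝ)) / P d (j+k+2)
        = ((d (j+k+2) - 1 : ℕ) : ℝ) / P d (j+k+2) := by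
      rw [← h, ← hsign]
      ring
    rw [div_eq_div_iff hp.ne' hp.ne'] at h2
    exact mul_right_cancel₀ hp.ne' h2
  have hkey1 := key (2*i)
  have hkey2 := key (2*i+1)
  have hs1 : ((-1:ℝ))^(2*i) = 1 := by rw [pow_mul]; norm_num
  have hs2 : ((-1:ℝ))^(2*i+1) = -1 := by rw [pow_succ, pow_mul]; norm_num
  rw [hs1, one_mul] at hkey1
  rw [hs2] at hkey2
  have hn1 : 2*i+k+2 = k+1+2*i+1 := by omega
  have hn2 : 2*i+1+k+2 = k+1+2*i+2 := by omega
  rw [hn1] at hkey1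
  rw [hn2] at hkey2
  have hb1 := hε (k+1+2*i+1) (by omega)
  have hb1' := hε' (k+1+2*i+1) (by omega)
  have hb2 := hε (k+1+2*i+2) (by omega)
  have hb2' := hε' (k+1+2*i+2) (by omega)
  have hnat1 : ε (k+1+2*i+1) = ε' (k+1+2*i+1) + (d (k+1+2*i+1) - 1) := by
    exact_mod_cast (by push_cast; linarith :
      (ε (k+1+2*i+1):ℝ) = ((ε' (k+1+2*i+1) + (d (k+1+2*i+1) - 1) : ℕ):ℝ))
  have hnat2 : ε' (k+1+2*i+2) = ε (k+1+2*i+2) + (d (k+1+2*i+2) - 1) := by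
    exact_mod_cast (by push_cast; linarith :
      (ε' (k+1+2*i+2):ℝ) = ((ε (k+1+2*i+2) + (d (k+1+2*i+2) - 1) : ℕ):ℝ))
  refine ⟨by omega, by omega, by omega, by omega⟩
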